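/- Let k be a perfect field of characteristic p > 0, let n ≥ 1, and let R = k[x_1,…,x_n]/(x_1·x_2 ⋯ x_n) be the quotient of the polynomial ring in n variables by the principal ideal generated by the product of all the variables. Then R is Frobenius split. -/

import Mathlib

/-- `φ : R → R` is an `e`-iterated Frobenius splitting of `R` (char `p`):
an additive map with `φ (r ^ p ^ e * x) = r * φ x` and `φ 1 = 1`. -/
def IsFrobSplitting {R : Type*} [CommRing R] (p e : ℕ) (φ : R → R) : Prop :=
  (∀ x y : R, φ (x + y) = φ x + φ y) ∧
  (∀ r x : R, φ (r ^ p ^ e * x) = r * φ x) ∧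
  φ 1 = 1

open MvPolynomial
section
variable {k : Type*} [Field k] [PerfectField k] (p : ℕ) [Fact p.Prime] [CharP k p] (n : ℕ)

lemma smulinj : Function.Injective (fun a : Fin n →₀ ℕ => p • a) := by
  intro a b h
  ext i
  have := congrFun (congrArg (fun f : Fin n →₀ ℕ => (f : Fin n → ℕ)) h) i
  simp only [Finsupp.coe_smul, Pi.smul_apply, smul_eq_mul] at this
  exact Nat.eq_of_mul_eq_mul_left (Fact.out : p.Prime).pos this

noncomputable def phiAux (f : MvPolynomial (Fin n) k) : MvPolynomial (Fin n) k :=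
  AddMonoidAlgebra.ofCoeff (Finsupp.comapDomain (fun a : Fin n →₀ ℕ => p • a)
    (Finsupp.mapRange (frobeniusEquiv k p).symm (map_zero _) (AddMonoidAlgebra.coeff f))
    ((smulinj p n).injOn))

lemma coeff_phiAux (f : MvPolynomial (Fin n) k) (a : Fin n →₀ ℕ) :
    coeff a (phiAux p n f) = (frobeniusEquiv k p).symm (coeff (p • a) f) := rfl

lemma phiAux_add (f g : MvPolynomial (Fin n) k) :
    phiAux p n (f + g) = phiAux p n f + phiAux p n g := by
  ext a; simp [coeff_phiAux, coeff_add]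

lemma phiAux_monomial_smul (m : Fin n →₀ ℕ) (c : k) :
    phiAux p n (monomial (p • m) c) = monomial m ((frobeniusEquiv k p).symm c) := by
  ext a
  simp only [coeff_phiAux, coeff_monomial]
  by_cases h : m = a
  · simp [h]
  · rw [if_neg h, if_neg (fun hh => h (smulinj p n hh)), map_zero]

lemma phiAux_monomial_ne (m : Fin n →₀ ℕ) (c : k) (h : ¬ ∃ b, m = p • b) :
    phiAux p n (monomial m c) = 0 := by
  ext a
  simp only [coeff_phiAux, coeff_monomial, coeff_zero]
  rw [if_neg (fun hh => h ⟨a, hh⟩), map_zero]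

lemma phiAux_mul (r f : MvPolynomial (Fin n) k) :
    phiAux p n (r ^ p * f) = r * phiAux p n f := by
  induction r using MvPolynomial.induction_on' with
  | add q r hq hr =>
      have : (q + r) ^ p = q ^ p + r ^ p := by
        rw [add_pow_char]
      rw [this, add_mul, phiAux_add, hq, hr, add_mul]
  | monomial b c =>
    induction f using MvPolynomial.induction_on' with
    | add q r hq hr => rw [mul_add, phiAux_add, hq, hr, phiAux_add, mul_add]
    | monomial a d =>
      rw [monomial_pow, monomial_mul]
      by_cases h : ∃ a', a = p • a'
      · obtain ⟨a', rfl⟩ := h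
        rw [← smul_add, phiAux_monomial_smul, phiAux_monomial_smul, monomial_mul,
          map_mul]
        congr 1
        · congr 1
          exact (frobeniusEquiv k p).symm_apply_apply c
      · rw [phiAux_monomial_ne p n a d h, mul_zero, phiAux_monomial_ne]
        rintro ⟨m, hm⟩
        apply h
        refine ⟨m - b, ?_⟩
        ext i
        have := congrFun (congrArg (fun f : Fin n →₀ ℕ => (f : Fin n → ℕ)) hm) i
        simp only [Finsupp.coe_add, Finsupp.coe_smul, Pi.add_apply, Pi.smul_apply,
          smul_eq_mul] at this ⊢
        simp only [Finsupp.coe_tsub, Pi.sub_apply]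
        have hle : b i ≤ m i :=
          Nat.le_of_mul_le_mul_left (by omega) (Fact.out : p.Prime).pos
        obtain ⟨d, hd⟩ := Nat.exists_eq_add_of_le hle
        rw [hd] at this ⊢
        simp only [Nat.add_sub_cancel_left]
        have : p * (b i + d) = p * b i + p * d := by ring
        omega

lemma phiAux_zero : phiAux p n (0 : MvPolynomial (Fin n) k) = 0 := by
  ext a; simp [coeff_phiAux]

lemma phiAux_sub (f g : MvPolynomial (Fin n) k) :
    phiAux p n (f - g) = phiAux p n f - phiAux p n g := by
  ext a; simp [coeff_phiAux, coeff_sub, map_sub]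

lemma phiAux_one : phiAux p n (1 : MvPolynomial (Fin n) k) = 1 := by
  have h0 : (1 : MvPolynomial (Fin n) k) = monomial (p • (0 : Fin n →₀ ℕ)) 1 := by
    simp
  rw [h0, phiAux_monomial_smul, map_one]
  simp

noncomputable def allOnes : Fin n →₀ ℕ := Finsupp.equivFunOnFinite.symm 1

omit [PerfectField k] [Fact p.Prime] [CharP k p] in
lemma prodX_eq : (∏ i : Fin n, (X i : MvPolynomial (Fin n) k)) = monomial (allOnes n) 1 := by
  rw [← prod_X_pow_eq_monomial]
  have hs : (allOnes n).support = Finset.univ := by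
    ext i; simp [allOnes]
  rw [hs]
  apply Finset.prod_congr rfl
  intro i _
  have : allOnes n i = 1 := rfl
  rw [this, pow_one]

lemma phiAux_mem (g : MvPolynomial (Fin n) k) :
    phiAux p n ((∏ i : Fin n, (X i : MvPolynomial (Fin n) k)) * g) ∈
      Ideal.span {∏ i : Fin n, (X i : MvPolynomial (Fin n) k)} := by
  induction g using MvPolynomial.induction_on' with
  | add q r hq hr => rw [mul_add, phiAux_add]; exact Ideal.add_mem _ hq hr
  | monomial a c =>
    rw [prodX_eq, monomial_mul, one_mul]
    by_cases h : ∃ m, allOnes n + a = p • m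
    · obtain ⟨m, hm⟩ := h
      rw [hm, phiAux_monomial_smul]
      rw [Ideal.mem_span_singleton]
      refine ⟨monomial (m - allOnes n) ((frobeniusEquiv k p).symm c), ?_⟩
      rw [monomial_mul, one_mul]
      have key : allOnes n + (m - allOnes n) = m := by
        ext i
        have := congrFun (congrArg (fun f : Fin n →₀ ℕ => (f : Fin n → ℕ)) hm) i
        simp only [Finsupp.coe_add, Finsupp.coe_smul, Pi.add_apply, Pi.smul_apply,
          smul_eq_mul] at this
        have h1 : allOnes n i = 1 := rfl
        simp only [Finsupp.coe_add, Finsupp.coe_tsub, Pi.add_apply, Pi.sub_apply, h1]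
        have hmpos : m i ≠ 0 := by
          intro h0; rw [h0, Nat.mul_zero] at this; omega
        omega
      rw [key]
    · rw [phiAux_monomial_ne p n _ c h]
      exact Ideal.zero_mem _
end

/-- `k[x_1,…,x_n]/(x_1 ⋯ x_n)` over a perfect field of characteristic `p > 0`
is Frobenius split. -/
theorem frobSplit_of_normalCrossing {k : Type*} [Field k] [PerfectField k]
    (p : ℕ) [Fact p.Prime] [CharP k p] (n : ℕ) (hn : 1 ≤ n) :
    ∃ φ : (MvPolynomial (Fin n) k ⧸
        Ideal.span {∏ i : Fin n, (MvPolynomial.X i : MvPolynomial (Fin n) k)}) →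
      (MvPolynomial (Fin n) k ⧸
        Ideal.span {∏ i : Fin n, (MvPolynomial.X i : MvPolynomial (Fin n) k)}),
      IsFrobSplitting p 1 φ := by
  set I : Ideal (MvPolynomial (Fin n) k) :=
    Ideal.span {∏ i : Fin n, (MvPolynomial.X i : MvPolynomial (Fin n) k)} with hI
  have hwd : ∀ a b : MvPolynomial (Fin n) k, @Setoid.r _ (Submodule.quotientRel I) a b →
      Ideal.Quotient.mk I (phiAux p n a) = Ideal.Quotient.mk I (phiAux p n b) := by
    intro a b hab
    rw [Submodule.quotientRel_def] at hab
    rw [Ideal.Quotient.eq, ← phiAux_sub]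
    obtain ⟨g, hg⟩ := Ideal.mem_span_singleton.1 hab
    rw [hg]
    exact phiAux_mem p n g
  refine ⟨fun x => Quotient.liftOn' x (fun f => Ideal.Quotient.mk I (phiAux p n f)) hwd,
    ?_, ?_, ?_⟩
  · intro x y
    obtain ⟨a, rfl⟩ := Ideal.Quotient.mk_surjective x
    obtain ⟨b, rfl⟩ := Ideal.Quotient.mk_surjective y
    show Ideal.Quotient.mk I (phiAux p n (a + b)) = _
    rw [phiAux_add, RingHom.map_add (Ideal.Quotient.mk I)]
    rfl
  · intro r x
    obtain ⟨a, rfl⟩ := Ideal.Quotient.mk_surjective r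
    obtain ⟨b, rfl⟩ := Ideal.Quotient.mk_surjective x
    rw [pow_one, ← RingHom.map_pow (Ideal.Quotient.mk I), ← RingHom.map_mul (Ideal.Quotient.mk I)]
    show Ideal.Quotient.mk I (phiAux p n (a ^ p * b)) = _
    rw [phiAux_mul, RingHom.map_mul (Ideal.Quotient.mk I)]
    rfl
  · show Ideal.Quotient.mk I (phiAux p n 1) = 1
    rw [phiAux_one, map_one]
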